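/- Let α ∈ (−π/4, π/4) and set λ = (cos α − sin α)^{1/3}, μ = (cos α + sin α)^{1/3}. Let θ₀ be the unique angle in (−π/4, π/4) with cos θ₀ = (λ+μ)/√(2(λ²+μ²)) and sin θ₀ = (λ−μ)/√(2(λ²+μ²)). Then cos(θ₀+α) + √(cos(2θ₀)·cos(2α)) = (λ²+μ²)^{3/2}/√2 = (1/√2)·((1−sin(2α))^{1/3} + (1+sin(2α))^{1/3})^{3/2}. -/

import Mathlib

open Real

noncomputable section

/-- Value of `f_α` at the critical point `θ₀`. With
`λ = (cos α − sin α)^{1/3}`, `μ = (cos α + sin α)^{1/3}` and `θ₀ ∈ (−π/4, π/4)` given by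
`cos θ₀ = (λ+μ)/√(2(λ²+μ²))`, `sin θ₀ = (λ−μ)/√(2(λ²+μ²))`, one has
`cos(θ₀+α) + √(cos 2θ₀ · cos 2α) = (λ²+μ²)^{3/2}/√2
  = (1/√2)·((1−sin 2α)^{1/3}+(1+sin 2α)^{1/3})^{3/2}`. -/
theorem value_at_critical_point
    (α : ℝ) (hα : α ∈ Set.Ioo (-(π / 4)) (π / 4))
    (l m θ₀ : ℝ)
    (hl : l = (Real.cos α - Real.sin α) ^ ((1 : ℝ) / 3))
    (hm : m = (Real.cos α + Real.sin α) ^ ((1 : ℝ) / 3))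
    (hθ₀ : θ₀ ∈ Set.Ioo (-(π / 4)) (π / 4))
    (hcos : Real.cos θ₀ = (l + m) / Real.sqrt (2 * (l ^ 2 + m ^ 2)))
    (hsin : Real.sin θ₀ = (l - m) / Real.sqrt (2 * (l ^ 2 + m ^ 2))) :
    Real.cos (θ₀ + α) + Real.sqrt (Real.cos (2 * θ₀) * Real.cos (2 * α)) =
        (l ^ 2 + m ^ 2) ^ ((3 : ℝ) / 2) / Real.sqrt 2 ∧
    Real.cos (θ₀ + α) + Real.sqrt (Real.cos (2 * θ₀) * Real.cos (2 * α)) =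
        1 / Real.sqrt 2 *
          ((1 - Real.sin (2 * α)) ^ ((1 : ℝ) / 3) +
            (1 + Real.sin (2 * α)) ^ ((1 : ℝ) / 3)) ^ ((3 : ℝ) / 2) := by
  obtain ⟨ha1, ha2⟩ := hα
  have hπ : (0:ℝ) < π / 4 := by positivity
  -- cos α > √2/2
  have habs : |α| < π / 4 := abs_lt.mpr ⟨ha1, ha2⟩
  have hcosα : Real.cos (π/4) < Real.cos α := by
    rw [← Real.cos_abs α]
    exact Real.cos_lt_cos_of_nonneg_of_le_pi (abs_nonneg α)
      (by linarith [Real.pi_pos]) habs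
  have hsin1 : Real.sin α < Real.sin (π/4) :=
    Real.sin_lt_sin_of_lt_of_le_pi_div_two (by linarith [Real.pi_pos]) (by linarith) ha2
  have hsin2 : Real.sin (-(π/4)) < Real.sin α :=
    Real.sin_lt_sin_of_lt_of_le_pi_div_two (by linarith [Real.pi_pos]) (by linarith) ha1
  rw [Real.sin_pi_div_four] at hsin1
  rw [Real.sin_neg, Real.sin_pi_div_four] at hsin2
  rw [Real.cos_pi_div_four] at hcosα
  have hc1 : 0 < Real.cos α - Real.sin α := by linarith
  have hc2 : 0 < Real.cos α + Real.sin α := by linarith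
  have hl0 : 0 < l := hl ▸ Real.rpow_pos_of_pos hc1 _
  have hm0 : 0 < m := hm ▸ Real.rpow_pos_of_pos hc2 _
  have hl3 : l ^ 3 = Real.cos α - Real.sin α := by
    rw [hl, ← Real.rpow_natCast (_ ^ ((1:ℝ)/3)) 3, ← Real.rpow_mul hc1.le]
    norm_num
  have hm3 : m ^ 3 = Real.cos α + Real.sin α := by
    rw [hm, ← Real.rpow_natCast (_ ^ ((1:ℝ)/3)) 3, ← Real.rpow_mul hc2.le]
    norm_num
  set S := Real.sqrt (2 * (l ^ 2 + m ^ 2)) with hS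
  have ht0 : (0:ℝ) < l ^ 2 + m ^ 2 := by positivity
  have hS0 : 0 < S := Real.sqrt_pos.mpr (by positivity)
  have hS2 : S ^ 2 = 2 * (l ^ 2 + m ^ 2) := Real.sq_sqrt (by positivity)
  have pyth := Real.sin_sq_add_cos_sq α
  -- cos (θ₀ + α)
  have hca : Real.cos (θ₀ + α) = (l ^ 4 + m ^ 4) / S := by
    rw [Real.cos_add, hcos, hsin]
    rw [div_mul_eq_mul_div, div_mul_eq_mul_div, ← sub_div]
    congr 1
    linear_combination (-l) * hl3 + (-m) * hm3
  -- cos 2θ₀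
  have h2θ : Real.cos (2 * θ₀) = 2 * l * m / (l ^ 2 + m ^ 2) := by
    rw [Real.cos_two_mul, hcos, div_pow, hS2]
    field_simp
    ring
  -- cos 2α
  have h2α : Real.cos (2 * α) = l ^ 3 * m ^ 3 := by
    rw [Real.cos_two_mul]
    linear_combination (-m^3) * hl3 + (-(Real.cos α - Real.sin α)) * hm3 + pyth
  -- the square root term
  have hsq : Real.sqrt (Real.cos (2 * θ₀) * Real.cos (2 * α)) = 2 * l ^ 2 * m ^ 2 / S := by
    rw [h2θ, h2α]
    rw [show 2 * l * m / (l ^ 2 + m ^ 2) * (l ^ 3 * m ^ 3) = (2 * l ^ 2 * m ^ 2 / S) ^ 2 by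
      rw [div_pow, hS2]; field_simp]
    exact Real.sqrt_sq (by positivity)
  have hLHS : Real.cos (θ₀ + α) + Real.sqrt (Real.cos (2 * θ₀) * Real.cos (2 * α)) =
      (l ^ 2 + m ^ 2) ^ 2 / S := by
    rw [hca, hsq, ← add_div]; congr 1; ring
  have hSsplit : S = Real.sqrt 2 * Real.sqrt (l ^ 2 + m ^ 2) := by
    rw [hS, Real.sqrt_mul (by norm_num)]
  have hrpow : (l ^ 2 + m ^ 2) ^ ((3:ℝ)/2) = (l ^ 2 + m ^ 2) * Real.sqrt (l ^ 2 + m ^ 2) := by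
    rw [show (3:ℝ)/2 = 1 + 1/2 by norm_num, Real.rpow_add ht0, Real.rpow_one,
      ← Real.sqrt_eq_rpow]
  have goal1 : Real.cos (θ₀ + α) + Real.sqrt (Real.cos (2 * θ₀) * Real.cos (2 * α)) =
      (l ^ 2 + m ^ 2) ^ ((3:ℝ)/2) / Real.sqrt 2 := by
    rw [hLHS, hrpow, hSsplit]
    have h2 : (0:ℝ) < Real.sqrt 2 := by positivity
    have hst : (0:ℝ) < Real.sqrt (l ^ 2 + m ^ 2) := Real.sqrt_pos.mpr ht0
    have hsq' : Real.sqrt (l ^ 2 + m ^ 2) ^ 2 = l ^ 2 + m ^ 2 := Real.sq_sqrt ht0.le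
    field_simp
    linear_combination (-1 : ℝ) * hsq'
  refine ⟨goal1, ?_⟩
  have e1 : (1 - Real.sin (2 * α)) ^ ((1:ℝ)/3) = l ^ 2 := by
    have : 1 - Real.sin (2 * α) = (Real.cos α - Real.sin α) ^ 2 := by
      rw [Real.sin_two_mul]; linear_combination -pyth
    rw [this, hl, ← Real.rpow_natCast (_ ^ ((1:ℝ)/3)) 2, ← Real.rpow_mul hc1.le,
      ← Real.rpow_natCast (Real.cos α - Real.sin α) 2, ← Real.rpow_mul hc1.le]
    norm_num
  have e2 : (1 + Real.sin (2 * α)) ^ ((1:ℝ)/3) = m ^ 2 := by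
    have : 1 + Real.sin (2 * α) = (Real.cos α + Real.sin α) ^ 2 := by
      rw [Real.sin_two_mul]; linear_combination -pyth
    rw [this, hm, ← Real.rpow_natCast (_ ^ ((1:ℝ)/3)) 2, ← Real.rpow_mul hc2.le,
      ← Real.rpow_natCast (Real.cos α + Real.sin α) 2, ← Real.rpow_mul hc2.le]
    norm_num
  rw [goal1, e1, e2, div_eq_mul_inv, one_div, mul_comm]
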